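/- If g_j = C(n − d − 2 + j, j) for 0 ≤ j ≤ l satisfies Σ_{i=0}^{l} C(n−d−2+i, i) · C(d+1−i, d−l) + g_{l+1} = C(n, l+1), then g_{l+1} = C(n−d−1+l, l+1). -/

import Mathlib

open Finset

lemma hockey_stick (b k : ℕ) :
    ∑ j ∈ range (k + 1), (b + j).choose j = (b + k + 1).choose k := by
  induction k with
  | zero => simp
  | succ k ih =>
    rw [sum_range_succ, ih, show b + (k + 1) + 1 = (b + k + 1) + 1 by ring,
      Nat.choose_succ_succ, Nat.succ_eq_add_one, show b + (k + 1) = b + k + 1 by ring]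

lemma vandermonde_aux (a : ℕ) : ∀ k b : ℕ,
    ∑ i ∈ range (k + 1), (a + i).choose i * (b + (k - i)).choose (k - i)
      = (a + b + k + 1).choose k := by
  induction a with
  | zero =>
    intro k b
    simp only [Nat.zero_add, Nat.choose_self, one_mul]
    have := Finset.sum_range_reflect (fun j => (b + j).choose j) (k + 1)
    simp only [Nat.add_sub_cancel] at this
    rw [this, hockey_stick]
  | succ a iha =>
    intro k
    induction k with
    | zero => intro b; simp
    | succ k ihk =>
      intro b
      rw [Finset.sum_range_succ']
      have step : ∀ i : ℕ,
          (a + 1 + (i + 1)).choose (i + 1) * (b + (k + 1 - (i + 1))).choose (k + 1 - (i + 1))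
          = (a + (i + 1)).choose i * (b + (k - i)).choose (k - i)
            + (a + (i + 1)).choose (i + 1) * (b + (k - i)).choose (k - i) := by
        intro i
        have h1 : k + 1 - (i + 1) = k - i := by omega
        rw [h1, show a + 1 + (i + 1) = (a + (i + 1)) + 1 by ring,
          Nat.choose_succ_succ, Nat.succ_eq_add_one, add_mul]
      simp only [step]
      rw [Finset.sum_add_distrib]
      have hA : (∑ i ∈ range (k + 1),
            (a + (i + 1)).choose (i + 1) * (b + (k - i)).choose (k - i))
            + (a + 1 + 0).choose 0 * (b + (k + 1 - 0)).choose (k + 1 - 0)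
          = (a + b + (k + 1) + 1).choose (k + 1) := by
        have h := iha (k + 1) b
        rw [Finset.sum_range_succ'] at h
        have hshift : ∀ i ∈ range (k + 1),
            (a + (i + 1)).choose (i + 1) * (b + (k + 1 - (i + 1))).choose (k + 1 - (i + 1))
            = (a + (i + 1)).choose (i + 1) * (b + (k - i)).choose (k - i) := by
          intro i _
          congr 2 <;> omega
        rw [Finset.sum_congr rfl hshift] at h
        simp only [Nat.choose_zero_right, one_mul, Nat.sub_zero] at h ⊢
        exact h
      have hB : (∑ i ∈ range (k + 1),
            (a + (i + 1)).choose i * (b + (k - i)).choose (k - i))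
          = (a + b + (k + 1) + 1).choose k := by
        have h := ihk b
        have hshift : ∀ i ∈ range (k + 1),
            (a + (i + 1)).choose i * (b + (k - i)).choose (k - i)
            = (a + 1 + i).choose i * (b + (k - i)).choose (k - i) := by
          intro i _
          congr 2
          omega
        rw [Finset.sum_congr rfl hshift, h]
        congr 1
        omega
      have hp : (a + 1 + b + (k + 1) + 1).choose (k + 1)
          = (a + b + (k + 1) + 1).choose k + (a + b + (k + 1) + 1).choose (k + 1) := by
        rw [show a + 1 + b + (k + 1) + 1 = (a + b + (k + 1) + 1) + 1 by ring,
          Nat.choose_succ_succ, Nat.succ_eq_add_one]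
      omega

/-- Induction step for g-vector entries: if
Σ_{i=0}^{l} C(n−d−2+i, i)·C(d+1−i, d−l) + g = C(n, l+1),
then g = C(n−d−1+l, l+1). -/
theorem g_vector_step (n d l g : ℕ) (hl : 1 ≤ l) (hld : 2 * (l + 1) ≤ d)
    (hn : d + 2 ≤ n)
    (heq : (∑ i ∈ Finset.range (l + 1),
        (n - d - 2 + i).choose i * (d + 1 - i).choose (d - l)) + g = n.choose (l + 1)) :
    g = (n - d - 1 + l).choose (l + 1) := by
  have key := vandermonde_aux (n - d - 2) (l + 1) (d - l)
  rw [Finset.sum_range_succ] at key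
  have htail : (n - d - 2 + (l + 1)).choose (l + 1)
      * (d - l + (l + 1 - (l + 1))).choose (l + 1 - (l + 1))
      = (n - d - 1 + l).choose (l + 1) := by
    simp only [Nat.sub_self, Nat.add_zero, Nat.choose_zero_right, mul_one]
    congr 1
    omega
  have hsum : ∑ i ∈ range (l + 1),
      (n - d - 2 + i).choose i * (d - l + (l + 1 - i)).choose (l + 1 - i)
      = ∑ i ∈ Finset.range (l + 1),
        (n - d - 2 + i).choose i * (d + 1 - i).choose (d - l) := by
    apply Finset.sum_congr rfl
    intro i hi
    simp only [Finset.mem_range] at hi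
    congr 1
    have h1 : d - l + (l + 1 - i) = d + 1 - i := by omega
    rw [h1]
    have h2 : l + 1 - i ≤ d + 1 - i := by omega
    have h3 : (d + 1 - i) - (l + 1 - i) = d - l := by omega
    rw [← h3, Nat.choose_symm h2]
  rw [htail, hsum, show n - d - 2 + (d - l) + (l + 1) + 1 = n by omega] at key
  omega
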